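/- Let f : ℝ → ℝ be continuous with f(t₀) = 0, f'(t) ≠ 0 at every zero of f (f is C¹ near its zeros), and f not identically zero. Suppose g : ℝ → ℝ is another such function whose zeros are all simple, and that f and g have no common zero. If f and g are solutions of the same second-order linear scalar ODE u'' + p(t)u' + q(t)u = 0 with continuous coefficients, then between any two consecutive zeros of f there lies exactly one zero of g (Sturm separation theorem). -/

import Mathlib

/-- Auxiliary Rolle-type lemma: if `v` never vanishes on `[a,b]`, `u` vanishes at both
endpoints, and the Wronskian `u v' - u' v` never vanishes, we get a contradiction. -/
lemma sturm_aux (u v : ℝ → ℝ) (hu : Differentiable ℝ u) (hv : Differentiable ℝ v)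
    (a b : ℝ) (hab : a < b) (hvne : ∀ t ∈ Set.Icc a b, v t ≠ 0)
    (hua : u a = 0) (hub : u b = 0)
    (hW : ∀ t, u t * deriv v t - deriv u t * v t ≠ 0) : False := by
  set h : ℝ → ℝ := fun t => u t / v t with hh
  have hcont : ContinuousOn h (Set.Icc a b) :=
    (hu.continuous.continuousOn).div (hv.continuous.continuousOn) hvne
  have hHab : h a = h b := by simp [hh, hua, hub]
  obtain ⟨c, hc, hc0⟩ := exists_deriv_eq_zero hab hcont hHab
  have hvc : v c ≠ 0 := hvne c ⟨le_of_lt hc.1, le_of_lt hc.2⟩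
  have hd : HasDerivAt h ((deriv u c * v c - u c * deriv v c) / (v c) ^ 2) c :=
    ((hu c).hasDerivAt).div ((hv c).hasDerivAt) hvc
  have h0 : (deriv u c * v c - u c * deriv v c) / (v c) ^ 2 = 0 := by
    rw [← hd.deriv]; exact hc0
  have hnum : deriv u c * v c - u c * deriv v c = 0 := by
    have := (div_eq_zero_iff.mp h0)
    rcases this with h1 | h2
    · exact h1
    · exact absurd h2 (pow_ne_zero 2 hvc)
  exact hW c (by linarith)

theorem stmt_14 (p q f g : ℝ → ℝ)
    (hp : Continuous p) (hq : Continuous q)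
    (hf : ContDiff ℝ 2 f) (hg : ContDiff ℝ 2 g)
    (hfode : ∀ t, deriv (deriv f) t + p t * deriv f t + q t * f t = 0)
    (hgode : ∀ t, deriv (deriv g) t + p t * deriv g t + q t * g t = 0)
    (hfne : ∃ t, f t ≠ 0) (hgne : ∃ t, g t ≠ 0)
    (hfzero : ∃ t₀, f t₀ = 0)
    (hfsimple : ∀ t, f t = 0 → deriv f t ≠ 0)
    (hgsimple : ∀ t, g t = 0 → deriv g t ≠ 0)
    (hnocommon : ∀ t, ¬(f t = 0 ∧ g t = 0)) :
    ∀ t₁ t₂ : ℝ, t₁ < t₂ → f t₁ = 0 → f t₂ = 0 →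
      (∀ t ∈ Set.Ioo t₁ t₂, f t ≠ 0) →
      ∃! t, t ∈ Set.Ioo t₁ t₂ ∧ g t = 0 := by
  -- basic differentiability facts
  have hfd : Differentiable ℝ f := hf.differentiable (by norm_num)
  have hgd : Differentiable ℝ g := hg.differentiable (by norm_num)
  have hf1 : ContDiff ℝ 1 (deriv f) :=
    (contDiff_succ_iff_deriv.mp (show ContDiff ℝ (1 + 1) f by norm_num [hf])).2.2
  have hg1 : ContDiff ℝ 1 (deriv g) :=
    (contDiff_succ_iff_deriv.mp (show ContDiff ℝ (1 + 1) g by norm_num [hg])).2.2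
  have hfd' : Differentiable ℝ (deriv f) := hf1.differentiable (by norm_num)
  have hgd' : Differentiable ℝ (deriv g) := hg1.differentiable (by norm_num)
  -- the Wronskian
  set W : ℝ → ℝ := fun t => f t * deriv g t - deriv f t * g t with hWdef
  have hW' : ∀ t, HasDerivAt W (-(p t) * W t) t := by
    intro t
    have h1 := (((hfd t).hasDerivAt).mul ((hgd' t).hasDerivAt)).sub
      (((hfd' t).hasDerivAt).mul ((hgd t).hasDerivAt))
    refine h1.congr_deriv ?_
    have e1 : deriv (deriv f) t = -(p t * deriv f t) - q t * f t := by linarith [hfode t]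
    have e2 : deriv (deriv g) t = -(p t * deriv g t) - q t * g t := by linarith [hgode t]
    simp only [hWdef]
    rw [e1, e2]; ring
  -- integrating factor
  set P : ℝ → ℝ := fun t => ∫ s in (0:ℝ)..t, p s with hPdef
  have hP : ∀ t, HasDerivAt P (p t) t := fun t =>
    intervalIntegral.integral_hasDerivAt_right (hp.intervalIntegrable 0 t)
      (hp.stronglyMeasurableAtFilter _ _) hp.continuousAt
  set F : ℝ → ℝ := fun t => W t * Real.exp (P t) with hFdef
  have hF : ∀ t, HasDerivAt F 0 t := by
    intro t
    have h2 := (hW' t).mul ((hP t).exp)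
    refine h2.congr_deriv ?_
    ring
  have hconst : ∀ x y, F x = F y :=
    is_const_of_deriv_eq_zero (fun x => (hF x).differentiableAt) (fun x => (hF x).deriv)
  intro t₁ t₂ hlt hft₁ hft₂ hfnz
  -- the Wronskian never vanishes
  have hgt₁ : g t₁ ≠ 0 := fun h => hnocommon t₁ ⟨hft₁, h⟩
  have hgt₂ : g t₂ ≠ 0 := fun h => hnocommon t₂ ⟨hft₂, h⟩
  have hWt₁ : W t₁ ≠ 0 := by
    simp only [hWdef, hft₁, zero_mul, zero_sub, neg_ne_zero]
    exact mul_ne_zero (hfsimple t₁ hft₁) hgt₁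
  have hWne : ∀ t, W t ≠ 0 := by
    intro t h0
    have h1 : F t = 0 := by simp [hFdef, h0]
    have h2 : F t₁ = 0 := (hconst t₁ t).trans h1
    exact (mul_ne_zero hWt₁ (Real.exp_ne_zero _)) h2
  -- existence
  have hex : ∃ t ∈ Set.Ioo t₁ t₂, g t = 0 := by
    by_contra hno
    push_neg at hno
    have hvne : ∀ t ∈ Set.Icc t₁ t₂, g t ≠ 0 := by
      intro t ht
      rcases eq_or_lt_of_le ht.1 with h | h
      · rw [← h]; exact hgt₁
      rcases eq_or_lt_of_le ht.2 with h' | h'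
      · rw [h']; exact hgt₂
      exact hno t ⟨h, h'⟩
    exact sturm_aux f g hfd hgd t₁ t₂ hlt hvne hft₁ hft₂ hWne
  obtain ⟨s, hsmem, hsz⟩ := hex
  refine ⟨s, ⟨hsmem, hsz⟩, ?_⟩
  -- uniqueness
  have huniq : ∀ a b : ℝ, a ∈ Set.Ioo t₁ t₂ → b ∈ Set.Ioo t₁ t₂ → g a = 0 → g b = 0 →
      a < b → False := by
    intro a b ha hb hga hgb hab
    have hvne : ∀ t ∈ Set.Icc a b, f t ≠ 0 := by
      intro t ht
      exact hfnz t ⟨lt_of_lt_of_le ha.1 ht.1, lt_of_le_of_lt ht.2 hb.2⟩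
    refine sturm_aux g f hgd hfd a b hab hvne hga hgb ?_
    intro t h0
    exact hWne t (by simp only [hWdef]; linarith)
  rintro y ⟨hymem, hyz⟩
  by_contra hne
  rcases lt_or_gt_of_ne hne with h | h
  · exact huniq y s hymem hsmem hyz hsz h
  · exact huniq s y hsmem hymem hsz hyz h
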